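/- (Convergence of ADM for the TV/L1 problem.) Let V, W be the spaces of real m×n and p×q matrices with the Frobenius inner product, H : V → V and L : V → W linear maps, B ∈ V, F(R) = ‖R − B‖_{1,1} = Σ_{i,j}|R_{ij} − B_{ij}|, G : W → ℝ convex, β > 0, ρ > 0, and L_{β,ρ}(X,R,Y,Z,W') = F(R) + G(Y) + (β/2)‖L(X) − Y‖_F² + ⟨L(X) − Y, Z⟩_F + (ρ/2)‖H(X) − R‖_F² + ⟨H(X) − R, W'⟩_F. Assume (X*,R*,Y*,Z*,W'*) is a saddle point of L_{β,ρ}. Let sequences satisfy: (X_k,R_k,Y_k) minimizes (X,R,Y) ↦ L_{β,ρ}(X,R,Y,Z_k,W_k); Z_{k+1} = Z_k + β(L(X_k) − Y_k); W_{k+1} = W_k + ρ(H(X_k) − R_k). Then (1) F(R_k) + G(Y_k) → F(R*) + G(Y*), (2) ‖L(X_k) − Y_k‖_F → 0, and (3) ‖H(X_k) − R_k‖_F → 0 as k → ∞. -/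

import Mathlib

open Matrix

/-- Frobenius inner product on real matrices. -/
noncomputable def fip {m n : ℕ} (A B : Matrix (Fin m) (Fin n) ℝ) : ℝ :=
  (Aᵀ * B).trace

/-- Frobenius norm on real matrices. -/
noncomputable def fnorm {m n : ℕ} (A : Matrix (Fin m) (Fin n) ℝ) : ℝ :=
  Real.sqrt (fip A A)

/-- The augmented Lagrangian `L_{β,ρ}(X,R,Y,Z,W')` for the TV/L1 model. -/
noncomputable def lag5 {m n p q : ℕ}
    (H : Matrix (Fin m) (Fin n) ℝ →ₗ[ℝ] Matrix (Fin m) (Fin n) ℝ)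
    (L : Matrix (Fin m) (Fin n) ℝ →ₗ[ℝ] Matrix (Fin p) (Fin q) ℝ)
    (F : Matrix (Fin m) (Fin n) ℝ → ℝ) (G : Matrix (Fin p) (Fin q) ℝ → ℝ)
    (β ρ : ℝ)
    (X R : Matrix (Fin m) (Fin n) ℝ) (Y Z : Matrix (Fin p) (Fin q) ℝ)
    (W' : Matrix (Fin m) (Fin n) ℝ) : ℝ :=
  F R + G Y + β / 2 * (fnorm (L X - Y)) ^ 2 + fip (L X - Y) Z
    + ρ / 2 * (fnorm (H X - R)) ^ 2 + fip (H X - R) W'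

/-- Saddle point of the five-variable augmented Lagrangian. -/
def IsSaddle5 {m n p q : ℕ}
    (Φ : Matrix (Fin m) (Fin n) ℝ → Matrix (Fin m) (Fin n) ℝ →
      Matrix (Fin p) (Fin q) ℝ → Matrix (Fin p) (Fin q) ℝ →
      Matrix (Fin m) (Fin n) ℝ → ℝ)
    (Xs Rs : Matrix (Fin m) (Fin n) ℝ) (Ys Zs : Matrix (Fin p) (Fin q) ℝ)
    (Ws : Matrix (Fin m) (Fin n) ℝ) : Prop :=
  ∀ X R Y Z W', Φ Xs Rs Ys Z W' ≤ Φ Xs Rs Ys Zs Ws ∧ Φ Xs Rs Ys Zs Ws ≤ Φ X R Y Zs Ws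

open Filter Topology

section AuxADM

open RealInnerProductSpace

/-- Embed matrices into Euclidean space. -/
noncomputable def toE {m n : ℕ} (A : Matrix (Fin m) (Fin n) ℝ) :
    EuclideanSpace ℝ (Fin m × Fin n) := WithLp.toLp 2 (fun p : Fin m × Fin n => A p.1 p.2)

lemma toE_add {m n : ℕ} (A B : Matrix (Fin m) (Fin n) ℝ) : toE (A + B) = toE A + toE B := rfl
lemma toE_sub {m n : ℕ} (A B : Matrix (Fin m) (Fin n) ℝ) : toE (A - B) = toE A - toE B := rfl
lemma toE_smul {m n : ℕ} (c : ℝ) (A : Matrix (Fin m) (Fin n) ℝ) : toE (c • A) = c • toE A := rfl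
lemma toE_zero {m n : ℕ} : toE (0 : Matrix (Fin m) (Fin n) ℝ) = 0 := rfl

lemma toE_eq_zero {m n : ℕ} {A : Matrix (Fin m) (Fin n) ℝ} (h : toE A = 0) : A = 0 := by
  ext i j
  exact congrArg (fun v : EuclideanSpace ℝ (Fin m × Fin n) => v (i, j)) h

lemma fip_eq_inner {m n : ℕ} (A B : Matrix (Fin m) (Fin n) ℝ) :
    fip A B = ⟪toE A, toE B⟫ := by
  simp only [fip, Matrix.trace, Matrix.diag, Matrix.mul_apply, Matrix.transpose_apply,
    PiLp.inner_apply, RCLike.inner_apply, conj_trivial, toE, PiLp.toLp_apply]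
  rw [Fintype.sum_prod_type]
  rw [Finset.sum_comm]
  exact Finset.sum_congr rfl fun _ _ => Finset.sum_congr rfl fun _ _ => mul_comm _ _

lemma fnorm_eq {m n : ℕ} (A : Matrix (Fin m) (Fin n) ℝ) : fnorm A = ‖toE A‖ := by
  rw [fnorm, fip_eq_inner, real_inner_self_eq_norm_sq, Real.sqrt_sq (norm_nonneg _)]

/-- Convexity of the entrywise `ℓ1` distance to `B`. -/
lemma Fconv {m n : ℕ} (B : Matrix (Fin m) (Fin n) ℝ) (F : Matrix (Fin m) (Fin n) ℝ → ℝ)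
    (hFdef : ∀ R, F R = ∑ i, ∑ j, |R i j - B i j|)
    (s t : ℝ) (hs : 0 ≤ s) (ht : 0 ≤ t) (hst : s + t = 1)
    (R1 R2 : Matrix (Fin m) (Fin n) ℝ) :
    F (s • R1 + t • R2) ≤ s * F R1 + t * F R2 := by
  rw [hFdef, hFdef, hFdef]
  calc ∑ i, ∑ j, |(s • R1 + t • R2) i j - B i j|
      ≤ ∑ i, ∑ j, (s * |R1 i j - B i j| + t * |R2 i j - B i j|) := by
        refine Finset.sum_le_sum fun i _ => Finset.sum_le_sum fun j _ => ?_
        have h1 : (s • R1 + t • R2) i j - B i j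
            = s * (R1 i j - B i j) + t * (R2 i j - B i j) := by
          simp only [Matrix.add_apply, Matrix.smul_apply, smul_eq_mul]
          linear_combination (B i j) * hst
        rw [h1]
        calc |s * (R1 i j - B i j) + t * (R2 i j - B i j)|
            ≤ |s * (R1 i j - B i j)| + |t * (R2 i j - B i j)| := abs_add_le _ _
          _ = s * |R1 i j - B i j| + t * |R2 i j - B i j| := by
              rw [abs_mul, abs_mul, abs_of_nonneg hs, abs_of_nonneg ht]
    _ = s * (∑ i, ∑ j, |R1 i j - B i j|) + t * (∑ i, ∑ j, |R2 i j - B i j|) := by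
        simp [Finset.sum_add_distrib, Finset.mul_sum]

/-- Abstract energy-decay consequence. -/
lemma aux_decay (a e : ℕ → ℝ) (ha : ∀ k, 0 ≤ a k) (he : ∀ k, 0 ≤ e k)
    (hstep : ∀ k, e (k + 1) ≤ e k - a k / 2) :
    Tendsto a atTop (𝓝 0) ∧ ∀ k, e k ≤ e 0 := by
  have hmono : ∀ k, e k ≤ e 0 := by
    intro k
    induction k with
    | zero => exact le_refl _
    | succ k ih => have h1 := hstep k; have h2 := ha k; linarith
  refine ⟨?_, hmono⟩
  have hsum : ∀ N, ∑ i ∈ Finset.range N, a i ≤ 2 * e 0 := by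
    intro N
    have h1 : ∑ i ∈ Finset.range N, a i ≤ ∑ i ∈ Finset.range N, 2 * (e i - e (i + 1)) := by
      refine Finset.sum_le_sum fun i _ => ?_
      have := hstep i; linarith
    have h2 : ∑ i ∈ Finset.range N, 2 * (e i - e (i + 1))
        = 2 * (e 0 - e N) := by
      rw [← Finset.mul_sum, Finset.sum_range_sub']
    have h3 := he N
    rw [h2] at h1
    linarith
  exact (summable_of_sum_range_le ha hsum).tendsto_atTop_zero

end AuxADM

open RealInnerProductSpace in
set_option maxHeartbeats 1000000 in
theorem stmt17 {m n p q : ℕ}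
    (H : Matrix (Fin m) (Fin n) ℝ →ₗ[ℝ] Matrix (Fin m) (Fin n) ℝ)
    (L : Matrix (Fin m) (Fin n) ℝ →ₗ[ℝ] Matrix (Fin p) (Fin q) ℝ)
    (B : Matrix (Fin m) (Fin n) ℝ)
    (F : Matrix (Fin m) (Fin n) ℝ → ℝ)
    (hFdef : ∀ R, F R = ∑ i, ∑ j, |R i j - B i j|)
    (G : Matrix (Fin p) (Fin q) ℝ → ℝ) (hG : ConvexOn ℝ Set.univ G)
    (β ρ : ℝ) (hβ : 0 < β) (hρ : 0 < ρ)
    (Xs Rs : Matrix (Fin m) (Fin n) ℝ) (Ys Zs : Matrix (Fin p) (Fin q) ℝ)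
    (Ws : Matrix (Fin m) (Fin n) ℝ)
    (hsaddle : IsSaddle5 (lag5 H L F G β ρ) Xs Rs Ys Zs Ws)
    (X R W : ℕ → Matrix (Fin m) (Fin n) ℝ) (Y Z : ℕ → Matrix (Fin p) (Fin q) ℝ)
    (hmin : ∀ k, ∀ X' R' Y', lag5 H L F G β ρ (X k) (R k) (Y k) (Z k) (W k) ≤
      lag5 H L F G β ρ X' R' Y' (Z k) (W k))
    (hZ : ∀ k, Z (k+1) = Z k + β • (L (X k) - Y k))
    (hW : ∀ k, W (k+1) = W k + ρ • (H (X k) - R k)) :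
    Tendsto (fun k => F (R k) + G (Y k)) atTop (𝓝 (F Rs + G Ys)) ∧
    Tendsto (fun k => fnorm (L (X k) - Y k)) atTop (𝓝 0) ∧
    Tendsto (fun k => fnorm (H (X k) - R k)) atTop (𝓝 0) := by
  have lag5_val : ∀ (X' R' : Matrix (Fin m) (Fin n) ℝ) (Y' Z' : Matrix (Fin p) (Fin q) ℝ)
      (W'' : Matrix (Fin m) (Fin n) ℝ),
      lag5 H L F G β ρ X' R' Y' Z' W'' = F R' + G Y' + β / 2 * ‖toE (L X' - Y')‖ ^ 2
        + ⟪toE (L X' - Y'), toE Z'⟫ + ρ / 2 * ‖toE (H X' - R')‖ ^ 2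
        + ⟪toE (H X' - R'), toE W''⟫ := by
    intro X' R' Y' Z' W''
    rw [lag5, fnorm_eq, fnorm_eq, fip_eq_inner, fip_eq_inner]
  -- Step 1 : the saddle residuals vanish
  have hkey := (hsaddle 0 0 0 (Zs + (L Xs - Ys)) (Ws + (H Xs - Rs))).1
  rw [lag5_val, lag5_val, toE_add, inner_add_right, toE_add, inner_add_right] at hkey
  have hiu : (0:ℝ) ≤ ⟪toE (L Xs - Ys), toE (L Xs - Ys)⟫ := real_inner_self_nonneg
  have hiv : (0:ℝ) ≤ ⟪toE (H Xs - Rs), toE (H Xs - Rs)⟫ := real_inner_self_nonneg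
  have hu0 : L Xs - Ys = 0 := by
    refine toE_eq_zero (inner_self_eq_zero.mp (le_antisymm (by linarith) hiu))
  have hv0 : H Xs - Rs = 0 := by
    refine toE_eq_zero (inner_self_eq_zero.mp (le_antisymm (by linarith) hiv))
  have hps : lag5 H L F G β ρ Xs Rs Ys Zs Ws = F Rs + G Ys := by
    rw [lag5_val, hu0, hv0, toE_zero, toE_zero, norm_zero, norm_zero,
      inner_zero_left, inner_zero_left]
    ring
  -- Step 2 : key inequality A1 from the minimization step (convex combination, t = 1/4)
  have hA1 : ∀ k, F (R k) + G (Y k)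
      + 7/4 * (β/2 * ‖toE (L (X k) - Y k)‖^2 + ρ/2 * ‖toE (H (X k) - R k)‖^2)
      + (⟪toE (L (X k) - Y k), toE (Z k)⟫ + ⟪toE (H (X k) - R k), toE (W k)⟫)
      ≤ F Rs + G Ys := by
    intro k
    have hm := hmin k ((3/4:ℝ) • X k + (1/4:ℝ) • Xs) ((3/4:ℝ) • R k + (1/4:ℝ) • Rs)
      ((3/4:ℝ) • Y k + (1/4:ℝ) • Ys)
    rw [lag5_val, lag5_val] at hm
    have e1 : L ((3/4:ℝ) • X k + (1/4:ℝ) • Xs) - ((3/4:ℝ) • Y k + (1/4:ℝ) • Ys)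
        = (3/4:ℝ) • (L (X k) - Y k) := by
      have h : L ((3/4:ℝ) • X k + (1/4:ℝ) • Xs) - ((3/4:ℝ) • Y k + (1/4:ℝ) • Ys)
          = (3/4:ℝ) • (L (X k) - Y k) + (1/4:ℝ) • (L Xs - Ys) := by
        rw [map_add, LinearMap.map_smul, LinearMap.map_smul]; module
      rw [h, hu0, smul_zero, add_zero]
    have e2 : H ((3/4:ℝ) • X k + (1/4:ℝ) • Xs) - ((3/4:ℝ) • R k + (1/4:ℝ) • Rs)
        = (3/4:ℝ) • (H (X k) - R k) := by
      have h : H ((3/4:ℝ) • X k + (1/4:ℝ) • Xs) - ((3/4:ℝ) • R k + (1/4:ℝ) • Rs)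
          = (3/4:ℝ) • (H (X k) - R k) + (1/4:ℝ) • (H Xs - Rs) := by
        rw [map_add, LinearMap.map_smul, LinearMap.map_smul]; module
      rw [h, hv0, smul_zero, add_zero]
    rw [e1, e2, toE_smul, toE_smul, norm_smul, norm_smul,
      real_inner_smul_left, real_inner_smul_left] at hm
    simp only [Real.norm_eq_abs, mul_pow] at hm
    rw [show |(3/4:ℝ)| = 3/4 by norm_num] at hm
    have hFc : F ((3/4:ℝ) • R k + (1/4:ℝ) • Rs) ≤ 3/4 * F (R k) + 1/4 * F Rs :=
      Fconv B F hFdef (3/4) (1/4) (by norm_num) (by norm_num) (by norm_num) _ _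
    have hGc : G ((3/4:ℝ) • Y k + (1/4:ℝ) • Ys) ≤ 3/4 * G (Y k) + 1/4 * G Ys := by
      have := hG.2 (Set.mem_univ (Y k)) (Set.mem_univ Ys)
        (by norm_num : (0:ℝ) ≤ 3/4) (by norm_num : (0:ℝ) ≤ 1/4) (by norm_num)
      simpa [smul_eq_mul] using this
    linarith
  -- Step 3 : key inequality B1 from the saddle right inequality (t = 1/4)
  have hB1 : ∀ k, F Rs + G Ys ≤ F (R k) + G (Y k)
      + 1/4 * (β/2 * ‖toE (L (X k) - Y k)‖^2 + ρ/2 * ‖toE (H (X k) - R k)‖^2)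
      + (⟪toE (L (X k) - Y k), toE Zs⟫ + ⟪toE (H (X k) - R k), toE Ws⟫) := by
    intro k
    have hs := (hsaddle ((3/4:ℝ) • Xs + (1/4:ℝ) • X k) ((3/4:ℝ) • Rs + (1/4:ℝ) • R k)
      ((3/4:ℝ) • Ys + (1/4:ℝ) • Y k) 0 0).2
    rw [hps, lag5_val] at hs
    have e1 : L ((3/4:ℝ) • Xs + (1/4:ℝ) • X k) - ((3/4:ℝ) • Ys + (1/4:ℝ) • Y k)
        = (1/4:ℝ) • (L (X k) - Y k) := by
      have h : L ((3/4:ℝ) • Xs + (1/4:ℝ) • X k) - ((3/4:ℝ) • Ys + (1/4:ℝ) • Y k)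
          = (3/4:ℝ) • (L Xs - Ys) + (1/4:ℝ) • (L (X k) - Y k) := by
        rw [map_add, LinearMap.map_smul, LinearMap.map_smul]; module
      rw [h, hu0, smul_zero, zero_add]
    have e2 : H ((3/4:ℝ) • Xs + (1/4:ℝ) • X k) - ((3/4:ℝ) • Rs + (1/4:ℝ) • R k)
        = (1/4:ℝ) • (H (X k) - R k) := by
      have h : H ((3/4:ℝ) • Xs + (1/4:ℝ) • X k) - ((3/4:ℝ) • Rs + (1/4:ℝ) • R k)
          = (3/4:ℝ) • (H Xs - Rs) + (1/4:ℝ) • (H (X k) - R k) := by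
        rw [map_add, LinearMap.map_smul, LinearMap.map_smul]; module
      rw [h, hv0, smul_zero, zero_add]
    rw [e1, e2, toE_smul, toE_smul, norm_smul, norm_smul,
      real_inner_smul_left, real_inner_smul_left] at hs
    simp only [Real.norm_eq_abs, mul_pow] at hs
    rw [show |(1/4:ℝ)| = 1/4 by norm_num] at hs
    have hFc : F ((3/4:ℝ) • Rs + (1/4:ℝ) • R k) ≤ 3/4 * F Rs + 1/4 * F (R k) :=
      Fconv B F hFdef (3/4) (1/4) (by norm_num) (by norm_num) (by norm_num) _ _
    have hGc : G ((3/4:ℝ) • Ys + (1/4:ℝ) • Y k) ≤ 3/4 * G Ys + 1/4 * G (Y k) := by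
      have := hG.2 (Set.mem_univ Ys) (Set.mem_univ (Y k))
        (by norm_num : (0:ℝ) ≤ 3/4) (by norm_num : (0:ℝ) ≤ 1/4) (by norm_num)
      simpa [smul_eq_mul] using this
    linarith
  -- Step 4 : energy decay
  have hstep : ∀ k,
      1/(2*β) * ‖toE (Z (k+1) - Zs)‖^2 + 1/(2*ρ) * ‖toE (W (k+1) - Ws)‖^2
      ≤ (1/(2*β) * ‖toE (Z k - Zs)‖^2 + 1/(2*ρ) * ‖toE (W k - Ws)‖^2)
        - (β/2 * ‖toE (L (X k) - Y k)‖^2 + ρ/2 * ‖toE (H (X k) - R k)‖^2) / 2 := by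
    intro k
    have hZ' : toE (Z (k+1) - Zs) = toE (Z k - Zs) + β • toE (L (X k) - Y k) := by
      rw [hZ k, ← toE_smul, ← toE_add]
      congr 1
      abel
    have hW' : toE (W (k+1) - Ws) = toE (W k - Ws) + ρ • toE (H (X k) - R k) := by
      rw [hW k, ← toE_smul, ← toE_add]
      congr 1
      abel
    have eZ : 1/(2*β) * ‖toE (Z (k+1) - Zs)‖^2
        = 1/(2*β) * ‖toE (Z k - Zs)‖^2
          + (⟪toE (L (X k) - Y k), toE (Z k)⟫ - ⟪toE (L (X k) - Y k), toE Zs⟫)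
          + β/2 * ‖toE (L (X k) - Y k)‖^2 := by
      rw [hZ', norm_add_sq_real, real_inner_smul_right, norm_smul, Real.norm_eq_abs,
        abs_of_pos hβ, mul_pow, real_inner_comm, toE_sub, inner_sub_right]
      field_simp
    have eW : 1/(2*ρ) * ‖toE (W (k+1) - Ws)‖^2
        = 1/(2*ρ) * ‖toE (W k - Ws)‖^2
          + (⟪toE (H (X k) - R k), toE (W k)⟫ - ⟪toE (H (X k) - R k), toE Ws⟫)
          + ρ/2 * ‖toE (H (X k) - R k)‖^2 := by
      rw [hW', norm_add_sq_real, real_inner_smul_right, norm_smul, Real.norm_eq_abs,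
        abs_of_pos hρ, mul_pow, real_inner_comm, toE_sub, inner_sub_right]
      field_simp
    have hAk := hA1 k
    have hBk := hB1 k
    rw [eZ, eW]
    linarith
  have ha_nonneg : ∀ k, (0:ℝ) ≤ β/2 * ‖toE (L (X k) - Y k)‖^2 + ρ/2 * ‖toE (H (X k) - R k)‖^2 := by
    intro k
    have h1 : (0:ℝ) ≤ β/2 * ‖toE (L (X k) - Y k)‖^2 :=
      mul_nonneg (by linarith) (sq_nonneg _)
    have h2 : (0:ℝ) ≤ ρ/2 * ‖toE (H (X k) - R k)‖^2 :=
      mul_nonneg (by linarith) (sq_nonneg _)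
    linarith
  have he_nonneg : ∀ k, (0:ℝ) ≤ 1/(2*β) * ‖toE (Z k - Zs)‖^2 + 1/(2*ρ) * ‖toE (W k - Ws)‖^2 := by
    intro k
    have h1 : (0:ℝ) ≤ 1/(2*β) * ‖toE (Z k - Zs)‖^2 :=
      mul_nonneg (by positivity) (sq_nonneg _)
    have h2 : (0:ℝ) ≤ 1/(2*ρ) * ‖toE (W k - Ws)‖^2 :=
      mul_nonneg (by positivity) (sq_nonneg _)
    linarith
  obtain ⟨ha0, hemon⟩ := aux_decay
    (fun k => β/2 * ‖toE (L (X k) - Y k)‖^2 + ρ/2 * ‖toE (H (X k) - R k)‖^2)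
    (fun k => 1/(2*β) * ‖toE (Z k - Zs)‖^2 + 1/(2*ρ) * ‖toE (W k - Ws)‖^2)
    ha_nonneg he_nonneg hstep
  -- Step 5 : residual norms tend to zero
  have hu2 : Tendsto (fun k => ‖toE (L (X k) - Y k)‖^2) atTop (𝓝 0) := by
    refine squeeze_zero (g := fun k => 2/β *
        (β/2 * ‖toE (L (X k) - Y k)‖^2 + ρ/2 * ‖toE (H (X k) - R k)‖^2))
      (fun k => sq_nonneg _) (fun k => ?_) ?_
    · show ‖toE (L (X k) - Y k)‖^2 ≤ 2/β *
        (β/2 * ‖toE (L (X k) - Y k)‖^2 + ρ/2 * ‖toE (H (X k) - R k)‖^2)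
      have hexp : 2/β * (β/2 * ‖toE (L (X k) - Y k)‖^2 + ρ/2 * ‖toE (H (X k) - R k)‖^2)
          = ‖toE (L (X k) - Y k)‖^2 + ρ/β * ‖toE (H (X k) - R k)‖^2 := by
        field_simp
      have h2 : (0:ℝ) ≤ ρ/β * ‖toE (H (X k) - R k)‖^2 :=
        mul_nonneg (div_nonneg hρ.le hβ.le) (sq_nonneg _)
      rw [hexp]
      linarith
    · have := ha0.const_mul (2/β)
      simpa using this
  have hv2 : Tendsto (fun k => ‖toE (H (X k) - R k)‖^2) atTop (𝓝 0) := by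
    refine squeeze_zero (g := fun k => 2/ρ *
        (β/2 * ‖toE (L (X k) - Y k)‖^2 + ρ/2 * ‖toE (H (X k) - R k)‖^2))
      (fun k => sq_nonneg _) (fun k => ?_) ?_
    · show ‖toE (H (X k) - R k)‖^2 ≤ 2/ρ *
        (β/2 * ‖toE (L (X k) - Y k)‖^2 + ρ/2 * ‖toE (H (X k) - R k)‖^2)
      have hexp : 2/ρ * (β/2 * ‖toE (L (X k) - Y k)‖^2 + ρ/2 * ‖toE (H (X k) - R k)‖^2)
          = β/ρ * ‖toE (L (X k) - Y k)‖^2 + ‖toE (H (X k) - R k)‖^2 := by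
        field_simp
      have h2 : (0:ℝ) ≤ β/ρ * ‖toE (L (X k) - Y k)‖^2 :=
        mul_nonneg (div_nonneg hβ.le hρ.le) (sq_nonneg _)
      rw [hexp]
      linarith
    · have := ha0.const_mul (2/ρ)
      simpa using this
  have hnu : Tendsto (fun k => ‖toE (L (X k) - Y k)‖) atTop (𝓝 0) := by
    have h := (Real.continuous_sqrt.tendsto 0).comp hu2
    simp only [Real.sqrt_zero] at h
    exact h.congr fun k => Real.sqrt_sq (norm_nonneg _)
  have hnv : Tendsto (fun k => ‖toE (H (X k) - R k)‖) atTop (𝓝 0) := by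
    have h := (Real.continuous_sqrt.tendsto 0).comp hv2
    simp only [Real.sqrt_zero] at h
    exact h.congr fun k => Real.sqrt_sq (norm_nonneg _)
  have goal2 : Tendsto (fun k => fnorm (L (X k) - Y k)) atTop (𝓝 0) := by
    simpa only [fnorm_eq] using hnu
  have goal3 : Tendsto (fun k => fnorm (H (X k) - R k)) atTop (𝓝 0) := by
    simpa only [fnorm_eq] using hnv
  -- Step 6 : boundedness of the multipliers
  have hZbd : ∀ k, ‖toE (Z k)‖ ≤
      Real.sqrt (2*β * (1/(2*β) * ‖toE (Z 0 - Zs)‖^2 + 1/(2*ρ) * ‖toE (W 0 - Ws)‖^2)) + ‖toE Zs‖ := by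
    intro k
    have h1 : toE (Z k) = toE (Z k - Zs) + toE Zs := by
      rw [toE_sub]; abel
    have h2 : ‖toE (Z k)‖ ≤ ‖toE (Z k - Zs)‖ + ‖toE Zs‖ := by
      rw [h1]; exact norm_add_le _ _
    have h3 : ‖toE (Z k - Zs)‖^2 ≤ 2*β * (1/(2*β) * ‖toE (Z 0 - Zs)‖^2 + 1/(2*ρ) * ‖toE (W 0 - Ws)‖^2) := by
      have hk := hemon k
      have h4 : (0:ℝ) ≤ 1/(2*ρ) * ‖toE (W k - Ws)‖^2 :=
        mul_nonneg (by positivity) (sq_nonneg _)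
      have h5 : 2*β * (1/(2*β) * ‖toE (Z k - Zs)‖^2 + 1/(2*ρ) * ‖toE (W k - Ws)‖^2)
          = ‖toE (Z k - Zs)‖^2 + 2*β * (1/(2*ρ) * ‖toE (W k - Ws)‖^2) := by
        field_simp
      nlinarith [hk, h4]
    have h6 : ‖toE (Z k - Zs)‖ ≤
        Real.sqrt (2*β * (1/(2*β) * ‖toE (Z 0 - Zs)‖^2 + 1/(2*ρ) * ‖toE (W 0 - Ws)‖^2)) := by
      calc ‖toE (Z k - Zs)‖ = Real.sqrt (‖toE (Z k - Zs)‖^2) := (Real.sqrt_sq (norm_nonneg _)).symm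
        _ ≤ _ := Real.sqrt_le_sqrt h3
    linarith
  have hWbd : ∀ k, ‖toE (W k)‖ ≤
      Real.sqrt (2*ρ * (1/(2*β) * ‖toE (Z 0 - Zs)‖^2 + 1/(2*ρ) * ‖toE (W 0 - Ws)‖^2)) + ‖toE Ws‖ := by
    intro k
    have h1 : toE (W k) = toE (W k - Ws) + toE Ws := by
      rw [toE_sub]; abel
    have h2 : ‖toE (W k)‖ ≤ ‖toE (W k - Ws)‖ + ‖toE Ws‖ := by
      rw [h1]; exact norm_add_le _ _
    have h3 : ‖toE (W k - Ws)‖^2 ≤ 2*ρ * (1/(2*β) * ‖toE (Z 0 - Zs)‖^2 + 1/(2*ρ) * ‖toE (W 0 - Ws)‖^2) := by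
      have hk := hemon k
      have h4 : (0:ℝ) ≤ 1/(2*β) * ‖toE (Z k - Zs)‖^2 :=
        mul_nonneg (by positivity) (sq_nonneg _)
      have h5 : 2*ρ * (1/(2*β) * ‖toE (Z k - Zs)‖^2 + 1/(2*ρ) * ‖toE (W k - Ws)‖^2)
          = 2*ρ * (1/(2*β) * ‖toE (Z k - Zs)‖^2) + ‖toE (W k - Ws)‖^2 := by
        field_simp
      nlinarith [hk, h4]
    have h6 : ‖toE (W k - Ws)‖ ≤
        Real.sqrt (2*ρ * (1/(2*β) * ‖toE (Z 0 - Zs)‖^2 + 1/(2*ρ) * ‖toE (W 0 - Ws)‖^2)) := by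
      calc ‖toE (W k - Ws)‖ = Real.sqrt (‖toE (W k - Ws)‖^2) := (Real.sqrt_sq (norm_nonneg _)).symm
        _ ≤ _ := Real.sqrt_le_sqrt h3
    linarith
  set Cz : ℝ := Real.sqrt (2*β * (1/(2*β) * ‖toE (Z 0 - Zs)‖^2 + 1/(2*ρ) * ‖toE (W 0 - Ws)‖^2)) + ‖toE Zs‖ with hCz
  set Cw : ℝ := Real.sqrt (2*ρ * (1/(2*β) * ‖toE (Z 0 - Zs)‖^2 + 1/(2*ρ) * ‖toE (W 0 - Ws)‖^2)) + ‖toE Ws‖ with hCw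
  -- Step 7 : the cross terms tend to zero
  have hb0 : Tendsto (fun k => ⟪toE (L (X k) - Y k), toE (Z k)⟫
      + ⟪toE (H (X k) - R k), toE (W k)⟫) atTop (𝓝 0) := by
    refine squeeze_zero_norm (a := fun k => ‖toE (L (X k) - Y k)‖ * Cz + ‖toE (H (X k) - R k)‖ * Cw)
      (fun k => ?_) ?_
    · calc ‖⟪toE (L (X k) - Y k), toE (Z k)⟫ + ⟪toE (H (X k) - R k), toE (W k)⟫‖
          = |⟪toE (L (X k) - Y k), toE (Z k)⟫ + ⟪toE (H (X k) - R k), toE (W k)⟫| := Real.norm_eq_abs _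
        _ ≤ |⟪toE (L (X k) - Y k), toE (Z k)⟫| + |⟪toE (H (X k) - R k), toE (W k)⟫| := abs_add_le _ _
        _ ≤ ‖toE (L (X k) - Y k)‖ * ‖toE (Z k)‖ + ‖toE (H (X k) - R k)‖ * ‖toE (W k)‖ :=
            add_le_add (abs_real_inner_le_norm _ _) (abs_real_inner_le_norm _ _)
        _ ≤ ‖toE (L (X k) - Y k)‖ * Cz + ‖toE (H (X k) - R k)‖ * Cw :=
            add_le_add (mul_le_mul_of_nonneg_left (hZbd k) (norm_nonneg _))
              (mul_le_mul_of_nonneg_left (hWbd k) (norm_nonneg _))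
    · have := (hnu.mul_const Cz).add (hnv.mul_const Cw)
      simpa using this
  have hc0 : Tendsto (fun k => ⟪toE (L (X k) - Y k), toE Zs⟫
      + ⟪toE (H (X k) - R k), toE Ws⟫) atTop (𝓝 0) := by
    refine squeeze_zero_norm (a := fun k => ‖toE (L (X k) - Y k)‖ * ‖toE Zs‖
      + ‖toE (H (X k) - R k)‖ * ‖toE Ws‖) (fun k => ?_) ?_
    · calc ‖⟪toE (L (X k) - Y k), toE Zs⟫ + ⟪toE (H (X k) - R k), toE Ws⟫‖
          = |⟪toE (L (X k) - Y k), toE Zs⟫ + ⟪toE (H (X k) - R k), toE Ws⟫| := Real.norm_eq_abs _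
        _ ≤ |⟪toE (L (X k) - Y k), toE Zs⟫| + |⟪toE (H (X k) - R k), toE Ws⟫| := abs_add_le _ _
        _ ≤ ‖toE (L (X k) - Y k)‖ * ‖toE Zs‖ + ‖toE (H (X k) - R k)‖ * ‖toE Ws‖ :=
            add_le_add (abs_real_inner_le_norm _ _) (abs_real_inner_le_norm _ _)
    · have := (hnu.mul_const ‖toE Zs‖).add (hnv.mul_const ‖toE Ws‖)
      simpa using this
  -- Step 8 : the objective values converge
  have goal1 : Tendsto (fun k => F (R k) + G (Y k)) atTop (𝓝 (F Rs + G Ys)) := by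
    refine tendsto_of_tendsto_of_tendsto_of_le_of_le
      (g := fun k => F Rs + G Ys
        - 1/4 * (β/2 * ‖toE (L (X k) - Y k)‖^2 + ρ/2 * ‖toE (H (X k) - R k)‖^2)
        - (⟪toE (L (X k) - Y k), toE Zs⟫ + ⟪toE (H (X k) - R k), toE Ws⟫))
      (h := fun k => F Rs + G Ys
        - (⟪toE (L (X k) - Y k), toE (Z k)⟫ + ⟪toE (H (X k) - R k), toE (W k)⟫))
      ?_ ?_ (fun k => ?_) (fun k => ?_)
    · have h : Tendsto (fun _ : ℕ => F Rs + G Ys) atTop (𝓝 (F Rs + G Ys)) :=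
        tendsto_const_nhds
      have := (h.sub (ha0.const_mul (1/4))).sub hc0
      simpa using this
    · have h : Tendsto (fun _ : ℕ => F Rs + G Ys) atTop (𝓝 (F Rs + G Ys)) :=
        tendsto_const_nhds
      have := h.sub hb0
      simpa using this
    · show F Rs + G Ys
        - 1/4 * (β/2 * ‖toE (L (X k) - Y k)‖^2 + ρ/2 * ‖toE (H (X k) - R k)‖^2)
        - (⟪toE (L (X k) - Y k), toE Zs⟫ + ⟪toE (H (X k) - R k), toE Ws⟫)
        ≤ F (R k) + G (Y k)
      have := hB1 k
      linarith
    · show F (R k) + G (Y k) ≤ F Rs + G Ys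
        - (⟪toE (L (X k) - Y k), toE (Z k)⟫ + ⟪toE (H (X k) - R k), toE (W k)⟫)
      have h1 := hA1 k
      have h2 := ha_nonneg k
      linarith
  exact ⟨goal1, goal2, goal3⟩
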